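/- arXiv:2312.12278 — 2 statements merged into one kernel-verified Lean document; each statement's English description precedes it below -/
import Mathlib

section
/- For every integer q > 1 and every integer k ≥ 0, the problem Convergence(k,q) admits a proof-labeling scheme with certificates of size at most b_max(k+1) · ⌈log₂ id_max⌉ · L(n,q) bits on n-node graphs whose identifiers are assigned injectively from [id_max], where L(n,q) is the maximum number of bits required to encode a local function of a q-state finite-state dynamics over an n-node graph (under the fixed table encoding, L(n,q) ≤ q^n·⌈log₂ q⌉ + (n+1)·⌈log₂(n+1)⌉). -/
/-!
STATEMENT 0: For every integer q > 1 and every integer k ≥ 0, the problem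
Convergence(k,q) admits a proof-labeling scheme with certificates of size at most
b_max(k+1) · ⌈log₂ id_max⌉ · L(n,q) bits on n-node graphs whose identifiers are
assigned injectively from [id_max], where L(n,q) is the maximum number of bits
required to encode a local function of a q-state FSD over an n-node graph
(under the fixed table encoding, L(n,q) ≤ q^n·⌈log₂ q⌉ + (n+1)·⌈log₂(n+1)⌉).
-/

/-- The closed neighborhood of a vertex. -/
def closedNbhd {V : Type*} (G : SimpleGraph V) (v : V) : Set V :=
  insert v (G.neighborSet v)

/-- `F` is a finite-state dynamics over `G`: the new state of each node depends only
on the current states of its closed neighborhood (equivalently, local functions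
`f_v : Q^{N[v]} → Q` with `F(x)_v = f_v(x|_{N[v]})` exist). -/
def IsFSD {V Q : Type*} (G : SimpleGraph V) (F : (V → Q) → V → Q) : Prop :=
  ∀ (v : V) (x y : V → Q), (∀ w ∈ closedNbhd G v, x w = y w) → F x v = F y v

/-- Every configuration reaches a fixed point after at most `k` time-steps. -/
def ConvergesIn {V Q : Type*} (F : (V → Q) → V → Q) (k : ℕ) : Prop :=
  ∀ x : V → Q, F (F^[k] x) = F^[k] x

/-- A proof-labeling scheme (verifier) for finite-state dynamics on `n`-node graphs
with state set `Q`.  The one-round verifier at a node outputs accept/reject as a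
function of the node's identifier, its incident edges, its local function, its own
certificate and the certificates of its neighbors only; this is enforced by the
`locality` condition. -/
structure PLS (n : ℕ) (Q : Type*) where
  verify : SimpleGraph (Fin n) → ((Fin n → Q) → Fin n → Q) →
      (Fin n → ℕ) → (Fin n → List Bool) → Fin n → Bool
  locality : ∀ G G' F F' ids ids' cert cert' (v : Fin n),
      (∀ w, G.Adj v w ↔ G'.Adj v w) →
      ids v = ids' v →
      (∀ w, G.Adj v w → ids w = ids' w) →
      (∀ x, F x v = F' x v) →
      cert v = cert' v →
      (∀ w, G.Adj v w → cert w = cert' w) →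
      verify G F ids cert v = verify G' F' ids' cert' v

/-- Correctness of a PLS `π` for the language `L` on the instance domain `Dom`,
with certificates of (possibly instance-dependent) size `size` and identifiers
assigned injectively from `[idMax] = {1,…,idMax}`: on yes-instances some certificate
assignment of the prescribed size makes every node accept (completeness), and on
no-instances every certificate assignment of the prescribed size is rejected at some
node (soundness). -/
def PLS.Correct {n : ℕ} {Q : Type*} (π : PLS n Q)
    (Dom L : SimpleGraph (Fin n) → ((Fin n → Q) → Fin n → Q) → Prop)
    (size : SimpleGraph (Fin n) → ((Fin n → Q) → Fin n → Q) → ℕ)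
    (idMax : ℕ) : Prop :=
  ∀ G F, G.Connected → IsFSD G F → Dom G F →
    ∀ ids : Fin n → ℕ, Function.Injective ids → (∀ v, 1 ≤ ids v ∧ ids v ≤ idMax) →
      ((L G F → ∃ cert : Fin n → List Bool,
          (∀ v, (cert v).length ≤ size G F) ∧ ∀ v, π.verify G F ids cert v = true) ∧
       (¬ L G F → ∀ cert : Fin n → List Bool,
          (∀ v, (cert v).length ≤ size G F) → ∃ v, π.verify G F ids cert v = false))

/-- `b_v(p)`: the number of edges of `G` with an endpoint at distance at most `p`
from `v`. -/
noncomputable def bv {n : ℕ} (G : SimpleGraph (Fin n)) (v : Fin n) (p : ℕ) : ℕ :=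
  {e ∈ G.edgeSet | ∃ u, u ∈ e ∧ G.dist v u ≤ p}.ncard

/-- `b_max(p) = max_v b_v(p)`. -/
noncomputable def bmax {n : ℕ} (G : SimpleGraph (Fin n)) (p : ℕ) : ℕ :=
  Finset.univ.sup fun v => bv G v p


namespace S0




/-- fixed-width binary encoding of a natural number -/
def encNat (w x : ℕ) : List Bool := (List.range w).map x.testBit

lemma encNat_length (w x : ℕ) : (encNat w x).length = w := by simp [encNat]

lemma encNat_inj {w x y : ℕ} (hx : x < 2 ^ w) (hy : y < 2 ^ w)
    (h : encNat w x = encNat w y) : x = y := by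
  apply Nat.eq_of_testBit_eq
  intro i
  by_cases hi : i < w
  · have h1 := congrArg (fun l => l.getD i true) h
    simpa [encNat, List.getD_eq_getElem?_getD, List.getElem?_map, List.getElem?_range hi]
      using h1
  · rw [Nat.testBit_eq_false_of_lt, Nat.testBit_eq_false_of_lt]
    · exact lt_of_lt_of_le hy (Nat.pow_le_pow_right (by norm_num) (le_of_not_gt hi))
    · exact lt_of_lt_of_le hx (Nat.pow_le_pow_right (by norm_num) (le_of_not_gt hi))

/-- table of a local function, as a function of the global configuration -/
abbrev Tbl (n q : ℕ) := (Fin n → Fin q) → Fin q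

/-- an entry of a certificate: a level and a table -/
abbrev Ent (n q : ℕ) := Fin n × Tbl n q

/-- width of one entry block -/
def WW (n q : ℕ) : ℕ := Nat.clog 2 n + q ^ n * Nat.clog 2 q

lemma card_Ent_le (n q : ℕ) : Fintype.card (Ent n q) ≤ 2 ^ WW n q := by
  have h1 : n ≤ 2 ^ Nat.clog 2 n := Nat.le_pow_clog (by norm_num) n
  have h2 : q ^ q ^ n ≤ 2 ^ (q ^ n * Nat.clog 2 q) := by
    calc q ^ q ^ n ≤ (2 ^ Nat.clog 2 q) ^ q ^ n :=
          Nat.pow_le_pow_left (Nat.le_pow_clog (by norm_num) q) _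
      _ = 2 ^ (q ^ n * Nat.clog 2 q) := by rw [← pow_mul, mul_comm]
  calc Fintype.card (Ent n q) = n * q ^ q ^ n := by
        simp [Ent, Tbl, Fintype.card_fun]
    _ ≤ 2 ^ Nat.clog 2 n * 2 ^ (q ^ n * Nat.clog 2 q) := Nat.mul_le_mul h1 h2
    _ = 2 ^ WW n q := by rw [← pow_add]; rfl

noncomputable def embE (n q : ℕ) : Ent n q ↪ Fin (2 ^ WW n q) :=
  Classical.choice (Function.Embedding.nonempty_of_card_le (by
    simpa using card_Ent_le n q))

noncomputable def blockE (n q : ℕ) : Option (Ent n q) → List Bool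
  | none => [false]
  | some a => true :: encNat (WW n q) (embE n q a : ℕ)

lemma blockE_prefix {n q : ℕ} {o₁ o₂ : Option (Ent n q)} {r₁ r₂ : List Bool}
    (h : blockE n q o₁ ++ r₁ = blockE n q o₂ ++ r₂) : o₁ = o₂ ∧ r₁ = r₂ := by
  match o₁, o₂ with
  | none, none => simpa [blockE] using h
  | none, some a => simp [blockE] at h
  | some a, none => simp [blockE] at h
  | some a, some b =>
    simp only [blockE, List.cons_append, List.cons.injEq, true_and] at h
    have hlen : (encNat (WW n q) (embE n q a : ℕ)).length
        = (encNat (WW n q) (embE n q b : ℕ)).length := by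
      rw [encNat_length, encNat_length]
    obtain ⟨h1, h2⟩ := List.append_inj h hlen
    refine ⟨?_, h2⟩
    have : (embE n q a : ℕ) = (embE n q b : ℕ) :=
      encNat_inj (by exact (embE n q a).isLt) (by exact (embE n q b).isLt) h1
    have : embE n q a = embE n q b := Fin.ext this
    exact congrArg some ((embE n q).injective this)

noncomputable def encd (n q : ℕ) (d : Fin n → Option (Ent n q)) : List Bool :=
  (List.finRange n).flatMap fun u => blockE n q (d u)

lemma encd_aux {n q : ℕ} (l : List (Fin n)) (d₁ d₂ : Fin n → Option (Ent n q))
    (h : (l.flatMap fun u => blockE n q (d₁ u)) = l.flatMap fun u => blockE n q (d₂ u)) :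
    ∀ u ∈ l, d₁ u = d₂ u := by
  induction l with
  | nil => simp
  | cons a l ih =>
    simp only [List.flatMap_cons] at h
    obtain ⟨h1, h2⟩ := blockE_prefix h
    intro u hu
    rcases List.mem_cons.mp hu with rfl | hu
    · exact h1
    · exact ih h2 u hu

lemma encd_inj (n q : ℕ) : Function.Injective (encd n q) := by
  intro d₁ d₂ h
  funext u
  exact encd_aux (List.finRange n) d₁ d₂ h u (List.mem_finRange u)

noncomputable def decd (n q : ℕ) : List Bool → (Fin n → Option (Ent n q)) :=
  Function.invFun (encd n q)

lemma decd_encd (n q : ℕ) (d : Fin n → Option (Ent n q)) : decd n q (encd n q d) = d :=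
  Function.leftInverse_invFun (encd_inj n q) d

lemma encd_length_le {n q : ℕ} (d : Fin n → Option (Ent n q)) :
    (encd n q d).length ≤
      n + WW n q * (Finset.univ.filter fun u => (d u).isSome).card := by
  have key : ∀ l : List (Fin n),
      ((l.flatMap fun u => blockE n q (d u)).length) ≤
        l.length + WW n q * (l.countP fun u => (d u).isSome) := by
    intro l
    induction l with
    | nil => simp
    | cons a l ih =>
      simp only [List.flatMap_cons, List.length_append, List.length_cons, List.countP_cons]
      rcases d a with _ | e
      · have h1 : (blockE n q none).length = 1 := by simp [blockE]
        rw [h1]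
        have h2 : (if (none : Option (Ent n q)).isSome = true then 1 else 0) = 0 := by simp
        rw [h2]
        simp only [Nat.add_zero]
        omega
      · have h1 : (blockE n q (some e)).length = WW n q + 1 := by
          simp [blockE, encNat_length]
        rw [h1]
        have h2 : (if (some e).isSome = true then 1 else 0) = 1 := by simp
        rw [h2]
        nlinarith [ih]
  calc (encd n q d).length ≤
      (List.finRange n).length + WW n q * ((List.finRange n).countP fun u => (d u).isSome) :=
        key _
    _ = n + WW n q * (Finset.univ.filter fun u => (d u).isSome).card := by
        congr 1
        · simp
        · rw [List.countP_eq_length_filter]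
          have h1 : (Finset.univ : Finset (Fin n)) = (List.finRange n).toFinset := by
            simp
          rw [h1, ← List.toFinset_filter,
            List.toFinset_card_of_nodup ((List.nodup_finRange n).filter _)]




open SimpleGraph

lemma exists_pred {n : ℕ} {G : SimpleGraph (Fin n)} (hconn : G.Connected)
    {v u : Fin n} (hne : u ≠ v) :
    ∃ w, G.Adj u w ∧ G.dist v w + 1 = G.dist v u := by
  obtain ⟨p, hp⟩ := (hconn v u).exists_walk_length_eq_dist
  cases hw : p.reverse with
  | nil => exact absurd rfl hne
  | cons hadj q' =>
    rename_i w
    refine ⟨w, hadj, ?_⟩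
    have hlen : q'.length + 1 = p.length := by
      have := congrArg SimpleGraph.Walk.length hw
      simp only [SimpleGraph.Walk.length_reverse, SimpleGraph.Walk.length_cons] at this
      omega
    have h1 : G.dist v w ≤ q'.length := by
      simpa [SimpleGraph.Walk.length_reverse] using SimpleGraph.dist_le q'.reverse
    have h2 : G.dist v u ≤ G.dist v w + G.dist w u := hconn.dist_triangle
    have h3 : G.dist w u ≤ 1 := by
      simpa using SimpleGraph.dist_le (SimpleGraph.Walk.cons hadj.symm SimpleGraph.Walk.nil)
    omega

lemma exists_first {n : ℕ} {G : SimpleGraph (Fin n)} (hconn : G.Connected)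
    {v u : Fin n} (hne : u ≠ v) :
    ∃ w, G.Adj v w ∧ G.dist w u + 1 = G.dist v u := by
  obtain ⟨w, h1, h2⟩ := exists_pred hconn (v := u) (u := v) (Ne.symm hne)
  refine ⟨w, h1, ?_⟩
  rw [SimpleGraph.dist_comm (G := G) (u := w) (v := u),
    SimpleGraph.dist_comm (G := G) (u := v) (v := u)]
  exact h2

lemma dist_pos_of_ne {n : ℕ} {G : SimpleGraph (Fin n)} (hconn : G.Connected)
    {v u : Fin n} (hne : u ≠ v) : 1 ≤ G.dist v u := by
  obtain ⟨w, _, h2⟩ := exists_pred hconn hne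
  omega

lemma dist_lt_n {n : ℕ} {G : SimpleGraph (Fin n)} (hconn : G.Connected)
    (v u : Fin n) : G.dist v u < n := by
  obtain ⟨p, _⟩ := (hconn v u).exists_walk_length_eq_dist
  have h1 : G.dist v u ≤ p.bypass.length := SimpleGraph.dist_le p.bypass
  have h2 : p.bypass.length < Fintype.card (Fin n) := p.bypass_isPath.length_lt
  simpa using lt_of_le_of_lt h1 h2

lemma adj_dist_eq_one {n : ℕ} {G : SimpleGraph (Fin n)} {v w : Fin n}
    (h : G.Adj v w) : G.dist v w = 1 := SimpleGraph.dist_eq_one_iff_adj.mpr h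

lemma ball_card_le {n : ℕ} {G : SimpleGraph (Fin n)} (hconn : G.Connected)
    (v : Fin n) (k : ℕ) :
    (Finset.univ.filter fun u => u ≠ v ∧ G.dist v u ≤ k).card ≤ bv G v (k + 1) := by
  classical
  have hex : ∀ u : Fin n, ∃ w, u ≠ v → (G.Adj u w ∧ G.dist v w + 1 = G.dist v u) := by
    intro u
    by_cases h : u ≠ v
    · obtain ⟨w, hw⟩ := exists_pred hconn h
      exact ⟨w, fun _ => hw⟩
    · exact ⟨v, fun h' => absurd h' h⟩
  choose f hf using hex
  rw [← Set.ncard_coe_finset]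
  apply Set.ncard_le_ncard_of_injOn (fun u => s(u, f u))
  · intro u hu
    simp only [Finset.coe_filter, Set.mem_setOf_eq, Finset.mem_univ, true_and] at hu
    obtain ⟨hadj, _⟩ := hf u hu.1
    refine ⟨G.mem_edgeSet.mpr hadj, u, Sym2.mem_mk_left u (f u), by omega⟩
  · intro u₁ h₁ u₂ h₂ heq
    simp only [Finset.coe_filter, Set.mem_setOf_eq, Finset.mem_univ, true_and] at h₁ h₂
    obtain ⟨_, hd₁⟩ := hf u₁ h₁.1
    obtain ⟨_, hd₂⟩ := hf u₂ h₂.1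
    rcases Sym2.eq_iff.mp heq with ⟨h, _⟩ | ⟨ha, hb⟩
    · exact h
    · exfalso; rw [← ha] at hd₂; rw [hb] at hd₁; omega

lemma bv_pos {n : ℕ} {G : SimpleGraph (Fin n)} (hconn : G.Connected)
    (hn : 2 ≤ n) (v : Fin n) (p : ℕ) : 1 ≤ bv G v p := by
  have : Nontrivial (Fin n) := Fin.nontrivial_iff_two_le.mpr hn
  obtain ⟨u, hu⟩ := exists_ne v
  obtain ⟨w, hadj, _⟩ := exists_first hconn hu
  have hne : ({e ∈ G.edgeSet | ∃ u, u ∈ e ∧ G.dist v u ≤ p} : Set (Sym2 (Fin n))).Nonempty := by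
    refine ⟨s(v, w), G.mem_edgeSet.mpr hadj, v, Sym2.mem_mk_left v w, ?_⟩
    rw [SimpleGraph.dist_self]
    exact Nat.zero_le p
  rw [bv]
  exact (Set.ncard_pos (Set.toFinite _)).mpr hne



lemma simIter {n q : ℕ} {G : SimpleGraph (Fin n)} (hconn : G.Connected)
    {F Fh : (Fin n → Fin q) → Fin n → Fin q} (hF : IsFSD G F) :
    ∀ (j : ℕ) (v : Fin n), (∀ u, G.dist v u + 1 ≤ j → ∀ y, Fh y u = F y u) →
      ∀ x, Fh^[j] x v = F^[j] x v := by
  intro j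
  induction j with
  | zero => intro v _ x; rfl
  | succ j ih =>
    intro v h x
    rw [Function.iterate_succ_apply', Function.iterate_succ_apply']
    rw [h v (by rw [SimpleGraph.dist_self]; omega) (Fh^[j] x)]
    apply hF v
    intro w hw
    apply ih w
    intro u hu y
    apply h
    rcases Set.mem_insert_iff.mp hw with rfl | hadj
    · omega
    · have h1 : G.dist v u ≤ G.dist v w + G.dist w u := hconn.dist_triangle
      have h2 : G.dist v w = 1 := adj_dist_eq_one hadj
      omega

lemma sim_clause {n q k : ℕ} {G : SimpleGraph (Fin n)} (hconn : G.Connected)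
    {F Fh : (Fin n → Fin q) → Fin n → Fin q} (hF : IsFSD G F)
    (v : Fin n) (hag : ∀ u, G.dist v u ≤ k → ∀ y, Fh y u = F y u) :
    (∀ x, Fh (Fh^[k] x) v = F (F^[k] x) v) ∧ ∀ x, Fh^[k] x v = F^[k] x v := by
  have hiter : ∀ w, (w = v ∨ G.Adj v w) → ∀ x, Fh^[k] x w = F^[k] x w := by
    intro w hw x
    apply simIter hconn hF k w _ x
    intro u hu y
    apply hag
    rcases hw with rfl | hadj
    · omega
    · have h1 : G.dist v u ≤ G.dist v w + G.dist w u := hconn.dist_triangle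
      have h2 : G.dist v w = 1 := adj_dist_eq_one hadj
      have h3 : G.dist w u + 1 ≤ k := hu
      omega
  refine ⟨?_, fun x => hiter v (Or.inl rfl) x⟩
  intro x
  rw [hag v (by rw [SimpleGraph.dist_self]; omega) (Fh^[k] x)]
  apply hF v
  intro w hw
  exact hiter w (Set.mem_insert_iff.mp hw) x

/-- the reconstructed global dynamics at node `v` -/
noncomputable def FhatD (n q : ℕ) (slice : (Fin n → Fin q) → Fin q)
    (dv : Fin n → Option (Ent n q)) (v : Fin n) : (Fin n → Fin q) → Fin n → Fin q :=
  fun x u => if u = v then slice x else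
    match dv u with
    | some p => p.2 x
    | none => x u

/-- all local tests of the verifier, phrased on the locally visible data -/
def checks (n q k : ℕ) (adj : Fin n → Prop) (slice : (Fin n → Fin q) → Fin q)
    (certs : Fin n → List Bool) (v : Fin n) : Prop :=
  if 2 ≤ n then
    (∀ w, adj w → ∀ p, decd n q (certs w) v = some p → ∀ x, p.2 x = slice x) ∧
    (∀ w, adj w → ∀ u p p', decd n q (certs v) u = some p →
        decd n q (certs w) u = some p' → p.2 = p'.2) ∧
    (1 ≤ k → ∀ w, adj w → ∃ p, decd n q (certs v) w = some p ∧ (p.1 : ℕ) ≤ 1) ∧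
    (∀ w, adj w → ∀ u p, decd n q (certs w) u = some p → (p.1 : ℕ) + 1 ≤ k → u ≠ v →
        ∃ p', decd n q (certs v) u = some p' ∧ (p'.1 : ℕ) ≤ (p.1 : ℕ) + 1) ∧
    (∀ x, FhatD n q slice (decd n q (certs v)) v
        ((FhatD n q slice (decd n q (certs v)) v)^[k] x) v
      = (FhatD n q slice (decd n q (certs v)) v)^[k] x v)
  else
    ConvergesIn (fun x (_ : Fin n) => slice x) k

open Classical in
/-- the proof-labeling scheme -/
noncomputable def thePLS (n q k : ℕ) : PLS n (Fin q) where
  verify G F _ cert v :=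
    @decide (checks n q k (fun w => G.Adj v w) (fun x => F x v)
      (fun w => if w = v ∨ G.Adj v w then cert w else []) v) (Classical.propDecidable _)
  locality := by
    intro G G' F F' ids ids' cert cert' v h1 _ _ h4 h5 h6
    have e1 : (fun w => G.Adj v w) = fun w => G'.Adj v w := by
      funext w; exact propext (h1 w)
    have e2 : (fun x => F x v) = fun x => F' x v := by funext x; exact h4 x
    have e3 : (fun w => if w = v ∨ G.Adj v w then cert w else [])
        = fun w => if w = v ∨ G'.Adj v w then cert' w else [] := by
      funext w
      by_cases hw : w = v
      · subst hw; rw [if_pos (Or.inl rfl), if_pos (Or.inl rfl)]; exact h5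
      · by_cases ha : G.Adj v w
        · rw [if_pos (Or.inr ha), if_pos (Or.inr ((h1 w).mp ha))]; exact h6 w ha
        · rw [if_neg (not_or.mpr ⟨hw, ha⟩),
            if_neg (not_or.mpr ⟨hw, fun h => ha ((h1 w).mpr h)⟩)]
    rw [e1, e2, e3]

lemma sound_main {n q k : ℕ} {G : SimpleGraph (Fin n)}
    {F : (Fin n → Fin q) → Fin n → Fin q} (hn : 2 ≤ n)
    (hconn : G.Connected) (hF : IsFSD G F) (ids : Fin n → ℕ) (cert : Fin n → List Bool)
    (hacc : ∀ v, (thePLS n q k).verify G F ids cert v = true) :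
    ConvergesIn F k := by
  classical
  set dv : Fin n → Fin n → Option (Ent n q) := fun v => decd n q (cert v) with hdv
  have hch : ∀ v, checks n q k (fun w => G.Adj v w) (fun x => F x v)
      (fun w => if w = v ∨ G.Adj v w then cert w else []) v :=
    fun v => of_decide_eq_true (hacc v)
  have C1 : ∀ v w, G.Adj v w → ∀ p, dv w v = some p → ∀ x, p.2 x = F x v := by
    intro v w hadj
    have h := hch v
    rw [checks, if_pos hn] at h
    have h1 := h.1 w hadj
    rwa [if_pos (Or.inr hadj)] at h1
  have C2 : ∀ v w, G.Adj v w → ∀ u p p', dv v u = some p → dv w u = some p' →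
      p.2 = p'.2 := by
    intro v w hadj
    have h := hch v
    rw [checks, if_pos hn] at h
    have h1 := h.2.1 w hadj
    rwa [if_pos (Or.inl rfl), if_pos (Or.inr hadj)] at h1
  have C3 : 1 ≤ k → ∀ v w, G.Adj v w → ∃ p, dv v w = some p ∧ (p.1 : ℕ) ≤ 1 := by
    intro hk v w hadj
    have h := hch v
    rw [checks, if_pos hn] at h
    have h1 := h.2.2.1 hk w hadj
    rwa [if_pos (Or.inl rfl)] at h1
  have C4 : ∀ v w, G.Adj v w → ∀ u p, dv w u = some p → (p.1 : ℕ) + 1 ≤ k → u ≠ v →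
      ∃ p', dv v u = some p' ∧ (p'.1 : ℕ) ≤ (p.1 : ℕ) + 1 := by
    intro v w hadj u p hp hk hne
    have h := hch v
    rw [checks, if_pos hn] at h
    have h1 := h.2.2.2.1 w hadj u p
    rw [if_pos (Or.inr hadj), if_pos (Or.inl rfl)] at h1
    exact h1 hp hk hne
  have C5 : ∀ v x, FhatD n q (fun x => F x v) (dv v) v
      ((FhatD n q (fun x => F x v) (dv v) v)^[k] x) v
      = (FhatD n q (fun x => F x v) (dv v) v)^[k] x v := by
    intro v x
    have h := hch v
    rw [checks, if_pos hn] at h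
    have h1 := h.2.2.2.2
    rw [if_pos (Or.inl rfl)] at h1
    exact h1 x
  have P : ∀ d, 1 ≤ d → d ≤ k → ∀ v u, G.dist v u = d →
      ∃ p, dv v u = some p ∧ (p.1 : ℕ) ≤ d ∧ ∀ y, p.2 y = F y u := by
    intro d
    induction d with
    | zero => intro h; exact absurd h (by omega)
    | succ d ih =>
      intro _ hdk v u hdist
      by_cases hd0 : d = 0
      · subst hd0
        have hadj : G.Adj v u := SimpleGraph.dist_eq_one_iff_adj.mp hdist
        obtain ⟨p, hp, hl⟩ := C3 (by omega) v u hadj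
        exact ⟨p, hp, by omega, fun y => C1 u v hadj.symm p hp y⟩
      · have hne : u ≠ v := by
          intro h
          rw [h, SimpleGraph.dist_self] at hdist
          omega
        obtain ⟨w, hadj, hwd⟩ := exists_first hconn hne
        obtain ⟨p, hp, hpl, hpt⟩ := ih (by omega) (by omega) w u (by omega)
        obtain ⟨p', hp', hl'⟩ := C4 v w hadj u p hp (by omega) hne
        refine ⟨p', hp', by omega, ?_⟩
        have h2 := C2 v w hadj u p' p hp' hp
        intro y
        rw [h2]
        exact hpt y
  have hag : ∀ v u, G.dist v u ≤ k → ∀ y,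
      FhatD n q (fun x => F x v) (dv v) v y u = F y u := by
    intro v u hdk y
    by_cases h : u = v
    · subst h
      simp [FhatD]
    · obtain ⟨p, hp, _, hpt⟩ := P (G.dist v u) (dist_pos_of_ne hconn h) hdk v u rfl
      simp only [FhatD, if_neg h, hp]
      exact hpt y
  intro x
  funext v
  have hsc := sim_clause (k := k) hconn hF v (hag v)
  calc F (F^[k] x) v = _ := (hsc.1 x).symm
    _ = _ := C5 v x
    _ = F^[k] x v := hsc.2 x

lemma complete_main {n q k idMax : ℕ} {G : SimpleGraph (Fin n)}
    {F : (Fin n → Fin q) → Fin n → Fin q} (hn : 2 ≤ n) (hid : n ≤ idMax)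
    (hconn : G.Connected) (hF : IsFSD G F) (hL : ConvergesIn F k) (ids : Fin n → ℕ) :
    ∃ cert : Fin n → List Bool,
      (∀ v, (cert v).length ≤ bmax G (k + 1) * Nat.clog 2 idMax *
        (q ^ n * Nat.clog 2 q + (n + 1) * Nat.clog 2 (n + 1))) ∧
      ∀ v, (thePLS n q k).verify G F ids cert v = true := by
  classical
  set dhon : Fin n → Fin n → Option (Ent n q) := fun v u =>
    if h : u ≠ v ∧ G.dist v u ≤ k
    then some (⟨G.dist v u, dist_lt_n hconn v u⟩, fun y => F y u) else none with hdhon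
  refine ⟨fun v => encd n q (dhon v), ?_, ?_⟩
  · intro v
    have h1 := encd_length_le (dhon v)
    have h2 : (Finset.univ.filter fun u => (dhon v u).isSome)
        = Finset.univ.filter fun u => u ≠ v ∧ G.dist v u ≤ k := by
      apply Finset.filter_congr
      intro u _
      by_cases h : u ≠ v ∧ G.dist v u ≤ k <;> simp [hdhon, h]
    rw [h2] at h1
    have h3 := ball_card_le hconn v k
    have h4 : bv G v (k + 1) ≤ bmax G (k + 1) := by
      rw [bmax]
      exact Finset.le_sup (f := fun v => bv G v (k + 1)) (Finset.mem_univ v)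
    have hB : 1 ≤ bmax G (k + 1) := le_trans (bv_pos hconn hn v (k + 1)) h4
    have hw0 : Nat.clog 2 n ≤ Nat.clog 2 idMax := Nat.clog_mono_right 2 hid
    have hC : 1 ≤ Nat.clog 2 idMax := by
      have h5 : (2 : ℕ) ^ 0 < idMax := by omega
      have h6 := (Nat.lt_clog_iff_pow_lt (by norm_num)).mpr h5
      omega
    have hcn1 : 2 ≤ Nat.clog 2 (n + 1) := by
      have h5 : (2 : ℕ) ^ 1 < n + 1 := by omega
      have h6 := (Nat.lt_clog_iff_pow_lt (by norm_num)).mpr h5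
      omega
    have ht : (Finset.univ.filter fun u => u ≠ v ∧ G.dist v u ≤ k).card
        ≤ bmax G (k + 1) := le_trans h3 h4
    set B := bmax G (k + 1)
    set C := Nat.clog 2 idMax
    set T := q ^ n * Nat.clog 2 q
    set t := (Finset.univ.filter fun u => u ≠ v ∧ G.dist v u ≤ k).card
    have h7 : (encd n q (dhon v)).length ≤ n + (Nat.clog 2 n + T) * t := by
      calc (encd n q (dhon v)).length ≤ n + WW n q * t := h1
        _ = n + (Nat.clog 2 n + T) * t := by rw [WW]
    refine le_trans h7 ?_
    have e1 : (Nat.clog 2 n + T) * t ≤ (C + T) * B :=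
      Nat.mul_le_mul (Nat.add_le_add hw0 le_rfl) ht
    have e3 : T * B ≤ B * C * T := by
      calc T * B = T * B * 1 := (Nat.mul_one _).symm
        _ ≤ T * B * C := Nat.mul_le_mul_left _ hC
        _ = B * C * T := by ring
    have h8 : 1 ≤ B * C := by
      calc 1 = 1 * 1 := rfl
        _ ≤ B * C := Nat.mul_le_mul hB hC
    have h9 : n * 1 ≤ n * (B * C) := Nat.mul_le_mul_left n h8
    have e4 : n + C * B ≤ B * C * ((n + 1) * Nat.clog 2 (n + 1)) := by
      have h5 : (n + 1) * 2 ≤ (n + 1) * Nat.clog 2 (n + 1) :=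
        Nat.mul_le_mul_left _ hcn1
      have h6 : B * C * ((n + 1) * 2) ≤ B * C * ((n + 1) * Nat.clog 2 (n + 1)) :=
        Nat.mul_le_mul_left _ h5
      refine le_trans ?_ h6
      nlinarith [h8, h9]
    calc n + (Nat.clog 2 n + T) * t ≤ n + (C + T) * B := Nat.add_le_add_left e1 n
      _ = n + C * B + T * B := by ring
      _ ≤ B * C * ((n + 1) * Nat.clog 2 (n + 1)) + B * C * T := Nat.add_le_add e4 e3
      _ = B * C * (T + (n + 1) * Nat.clog 2 (n + 1)) := by ring
  · intro v
    apply decide_eq_true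
    rw [checks, if_pos hn]
    have hmaskv : (if v = v ∨ G.Adj v v then encd n q (dhon v) else [])
        = encd n q (dhon v) := if_pos (Or.inl rfl)
    refine ⟨?_, ?_, ?_, ?_, ?_⟩
    · intro w hadj p hp x
      rw [if_pos (Or.inr hadj), decd_encd] at hp
      by_cases h : v ≠ w ∧ G.dist w v ≤ k
      · rw [hdhon] at hp
        simp only [dif_pos h] at hp
        rw [← Option.some.inj hp]
      · rw [hdhon] at hp
        simp only [dif_neg h] at hp
        exact (Option.some_ne_none _ hp.symm).elim
    · intro w hadj u p p' hp hp'
      rw [if_pos (Or.inl rfl), decd_encd] at hp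
      rw [if_pos (Or.inr hadj), decd_encd] at hp'
      rw [hdhon] at hp hp'
      by_cases h : u ≠ v ∧ G.dist v u ≤ k
      · by_cases h' : u ≠ w ∧ G.dist w u ≤ k
        · simp only [dif_pos h] at hp
          simp only [dif_pos h'] at hp'
          rw [← Option.some.inj hp, ← Option.some.inj hp']
        · simp only [dif_neg h'] at hp'
          exact (Option.some_ne_none _ hp'.symm).elim
      · simp only [dif_neg h] at hp
        exact (Option.some_ne_none _ hp.symm).elim
    · intro hk w hadj
      rw [if_pos (Or.inl rfl), decd_encd]
      have hcond : w ≠ v ∧ G.dist v w ≤ k := by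
        refine ⟨hadj.ne', ?_⟩
        rw [adj_dist_eq_one hadj]
        omega
      refine ⟨(⟨G.dist v w, dist_lt_n hconn v w⟩, fun y => F y w), ?_, ?_⟩
      · rw [hdhon]
        simp only [dif_pos hcond]
      · show G.dist v w ≤ 1
        rw [adj_dist_eq_one hadj]
    · intro w hadj u p hp hpk hne
      rw [if_pos (Or.inr hadj), decd_encd] at hp
      rw [if_pos (Or.inl rfl), decd_encd]
      rw [hdhon] at hp
      by_cases h' : u ≠ w ∧ G.dist w u ≤ k
      · simp only [dif_pos h'] at hp
        have hp1 : (p.1 : ℕ) = G.dist w u := by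
          rw [← Option.some.inj hp]
        have htri : G.dist v u ≤ G.dist v w + G.dist w u := hconn.dist_triangle
        have hdvw : G.dist v w = 1 := adj_dist_eq_one hadj
        have hcond : u ≠ v ∧ G.dist v u ≤ k := ⟨hne, by omega⟩
        refine ⟨(⟨G.dist v u, dist_lt_n hconn v u⟩, fun y => F y u), ?_, ?_⟩
        · rw [hdhon]
          simp only [dif_pos hcond]
        · show G.dist v u ≤ (p.1 : ℕ) + 1
          omega
      · simp only [dif_neg h'] at hp
        exact (Option.some_ne_none _ hp.symm).elim
    · rw [if_pos (Or.inl rfl), decd_encd]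
      have hag : ∀ u, G.dist v u ≤ k → ∀ y,
          FhatD n q (fun x => F x v) (dhon v) v y u = F y u := by
        intro u hdk y
        by_cases h : u = v
        · subst h
          simp [FhatD]
        · have hcond : u ≠ v ∧ G.dist v u ≤ k := ⟨h, hdk⟩
          have hsome : dhon v u = some (⟨G.dist v u, dist_lt_n hconn v u⟩,
              fun y => F y u) := by
            rw [hdhon]
            simp only [dif_pos hcond]
          simp only [FhatD, if_neg h, hsome]
      intro x
      have hsc := sim_clause (k := k) hconn hF v hag
      calc FhatD n q (fun x => F x v) (dhon v) v
            ((FhatD n q (fun x => F x v) (dhon v) v)^[k] x) v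
          = F (F^[k] x) v := hsc.1 x
        _ = F^[k] x v := by rw [hL x]
        _ = (FhatD n q (fun x => F x v) (dhon v) v)^[k] x v := (hsc.2 x).symm

end S0

/-- Convergence(k,q) admits a PLS with certificates of size
`b_max(k+1) · ⌈log₂ id_max⌉ · L(n,q)` bits, where
`L(n,q) ≤ q^n·⌈log₂ q⌉ + (n+1)·⌈log₂(n+1)⌉`. -/
theorem statement_0 (q k n idMax : ℕ) (hq : 1 < q) (hid : n ≤ idMax) :
    ∃ Lnq : ℕ, Lnq ≤ q ^ n * Nat.clog 2 q + (n + 1) * Nat.clog 2 (n + 1) ∧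
      ∃ π : PLS n (Fin q),
        π.Correct (fun _ _ => True) (fun _ F => ConvergesIn F k)
          (fun G _ => bmax G (k + 1) * Nat.clog 2 idMax * Lnq) idMax := by
  classical
  refine ⟨q ^ n * Nat.clog 2 q + (n + 1) * Nat.clog 2 (n + 1), le_rfl, S0.thePLS n q k, ?_⟩
  intro G F hconn hF _ ids _ _
  constructor
  · intro hL
    by_cases hn : 2 ≤ n
    · exact S0.complete_main hn hid hconn hF hL ids
    · refine ⟨fun _ => [], fun v => Nat.zero_le _, fun v => ?_⟩
      apply decide_eq_true
      rw [S0.checks, if_neg hn]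
      have hFe : (fun x (_ : Fin n) => F x v) = F := by
        funext x u
        have hu := u.isLt
        have hv := v.isLt
        have : u = v := Fin.ext (by omega)
        rw [this]
      rw [hFe]
      exact hL
  · intro hnL cert _
    by_contra hno
    push_neg at hno
    have hacc : ∀ v, (S0.thePLS n q k).verify G F ids cert v = true := by
      intro v
      cases hb : (S0.thePLS n q k).verify G F ids cert v
      · exact absurd hb (hno v)
      · rfl
    apply hnL
    by_cases hn : 2 ≤ n
    · exact S0.sound_main hn hconn hF ids cert hacc
    · rcases (by omega : n = 0 ∨ n = 1) with rfl | rfl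
      · intro x
        funext v
        exact v.elim0
      · have h := of_decide_eq_true (hacc ⟨0, by omega⟩)
        rw [S0.checks, if_neg (by omega)] at h
        have hFe : (fun x (_ : Fin 1) => F x ⟨0, by omega⟩) = F := by
          funext x u
          have : u = ⟨0, by omega⟩ := Fin.ext (by omega)
          rw [this]
        rwa [hFe] at h
end

section
/- For every integer q > 1, every integer Δ > 2, and every integer k ≥ 0, the problem Convergence(k,q) restricted to graphs of maximum degree at most Δ admits a proof-labeling scheme with certificates of size at most Δ·((Δ−1)^{k+1} − 1) · q^{Δ+1} · ⌈log₂ q⌉ · ⌈log₂ id_max⌉ bits, on graphs whose identifiers are assigned injectively from [id_max]. -/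
namespace Stmt2

noncomputable def cdecide (p : Prop) : Bool := @decide p (Classical.propDecidable p)

lemma cdecide_eq_true {p : Prop} (h : p) : cdecide p = true :=
  @decide_eq_true p (Classical.propDecidable p) h

lemma of_cdecide_eq_true {p : Prop} (h : cdecide p = true) : p :=
  @of_decide_eq_true p (Classical.propDecidable p) h

lemma cdecide_congr {p q : Prop} (h : p ↔ q) : cdecide p = cdecide q := by
  have := propext h; subst this; rfl

section Graph

variable {V : Type*} {G : SimpleGraph V}

lemma adj_dist_le_one {v w : V} (h : G.Adj v w) : G.dist v w ≤ 1 := by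
  have := SimpleGraph.dist_le (SimpleGraph.Walk.cons h SimpleGraph.Walk.nil)
  simpa using this

lemma dist_le_one_of_mem_closedNbhd {v w : V} (h : w ∈ closedNbhd G v) : G.dist v w ≤ 1 := by
  rcases h with h | h
  · subst h; simp [SimpleGraph.dist_self]
  · exact adj_dist_le_one h

lemma exists_adj_dist (hc : G.Connected) {v x : V} {r : ℕ}
    (h : G.dist v x = r + 1) : ∃ y, G.Adj y x ∧ G.dist v y = r := by
  obtain ⟨p, hp⟩ := (hc x v).exists_walk_length_eq_dist
  rw [SimpleGraph.dist_comm] at hp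
  rw [h] at hp
  cases p with
  | nil => simp at hp
  | @cons _ y _ ha q =>
    refine ⟨y, ha.symm, ?_⟩
    have hq : q.length = r := by simpa using hp
    have h1 : G.dist y v ≤ r := hq ▸ SimpleGraph.dist_le q
    have h2 : r ≤ G.dist y v := by
      by_contra hlt
      push_neg at hlt
      have ht := hc.dist_triangle (u := x) (v := y) (w := v)
      have hxy : G.dist x y ≤ 1 := adj_dist_le_one ha
      rw [SimpleGraph.dist_comm] at h
      omega
    rw [SimpleGraph.dist_comm]
    omega

lemma adj_of_dist_eq_one (hc : G.Connected) {v u : V} (h : G.dist v u = 1) : G.Adj v u := by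
  obtain ⟨p, hp⟩ := (hc v u).exists_walk_length_eq_dist
  rw [h] at hp
  cases p with
  | nil => simp at hp
  | @cons _ y _ ha q =>
    have hq : q.length = 0 := by simpa using hp
    have := q.eq_of_length_eq_zero hq
    subst this
    exact ha

end Graph

lemma dist_lt_card {n : ℕ} {G : SimpleGraph (Fin n)} (hc : G.Connected) (v u : Fin n) :
    G.dist v u < n := by
  obtain ⟨p, hp⟩ := (hc v u).exists_walk_length_eq_dist
  have h1 : G.dist v u ≤ p.bypass.length := SimpleGraph.dist_le p.bypass
  have h2 : p.bypass.length < Fintype.card (Fin n) := p.bypass_isPath.length_lt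
  simpa using lt_of_le_of_lt h1 h2

lemma iterate_agree {n : ℕ} {Q : Type*} {G G' : SimpleGraph (Fin n)}
    {F F' : (Fin n → Q) → Fin n → Q} (hF : IsFSD G F) (hF' : IsFSD G' F')
    (hc : G.Connected) :
    ∀ (j : ℕ) (v : Fin n),
      (∀ u, G.dist v u < j → closedNbhd G u = closedNbhd G' u ∧ ∀ x, F x u = F' x u) →
      ∀ x, F^[j] x v = F'^[j] x v := by
  intro j
  induction j with
  | zero => intro v _ x; simp
  | succ j ih =>
    intro v h x
    rw [Function.iterate_succ_apply', Function.iterate_succ_apply']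
    have h0 := h v (by simp [SimpleGraph.dist_self])
    have step1 : F (F^[j] x) v = F (F'^[j] x) v := by
      apply hF
      intro w hw
      have hdvw : G.dist v w ≤ 1 := dist_le_one_of_mem_closedNbhd hw
      apply ih w
      intro u hu
      apply h
      have := hc.dist_triangle (u := v) (v := w) (w := u)
      omega
    rw [step1, h0.2 (F'^[j] x)]

section Ball

variable {n : ℕ}

/-- sphere of radius `r` around `v` -/
noncomputable def sph (G : SimpleGraph (Fin n)) (v : Fin n) (r : ℕ) : Finset (Fin n) :=
  Finset.univ.filter (fun u => G.dist v u = r)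

/-- ball of radius `r` around `v` -/
noncomputable def bal (G : SimpleGraph (Fin n)) (v : Fin n) (r : ℕ) : Finset (Fin n) :=
  Finset.univ.filter (fun u => G.dist v u ≤ r)

lemma mem_bal {G : SimpleGraph (Fin n)} {v u : Fin n} {r : ℕ} :
    u ∈ bal G v r ↔ G.dist v u ≤ r := by simp [bal]

/-- the finset closed neighborhood -/
noncomputable def cnbF (G : SimpleGraph (Fin n)) (u : Fin n) : Finset (Fin n) :=
  (closedNbhd G u).toFinite.toFinset

lemma coe_cnbF (G : SimpleGraph (Fin n)) (u : Fin n) :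
    (cnbF G u : Set (Fin n)) = closedNbhd G u := Set.Finite.coe_toFinset _

lemma mem_cnbF {G : SimpleGraph (Fin n)} {u w : Fin n} :
    w ∈ cnbF G u ↔ w ∈ closedNbhd G u := Set.Finite.mem_toFinset _

noncomputable def nbF (G : SimpleGraph (Fin n)) (u : Fin n) : Finset (Fin n) :=
  (G.neighborSet u).toFinite.toFinset

lemma mem_nbF {G : SimpleGraph (Fin n)} {u w : Fin n} :
    w ∈ nbF G u ↔ G.Adj u w := Set.Finite.mem_toFinset _

lemma card_nbF {G : SimpleGraph (Fin n)} {u : Fin n} {Δ : ℕ}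
    (h : (G.neighborSet u).ncard ≤ Δ) : (nbF G u).card ≤ Δ := by
  rwa [Set.ncard_eq_toFinset_card _ (Set.toFinite _)] at h

lemma card_cnbF {G : SimpleGraph (Fin n)} {u : Fin n} {Δ : ℕ}
    (h : (G.neighborSet u).ncard ≤ Δ) : (cnbF G u).card ≤ Δ + 1 := by
  have h1 : (closedNbhd G u).ncard ≤ (G.neighborSet u).ncard + 1 := Set.ncard_insert_le _ _
  have h2 : (closedNbhd G u).ncard = (cnbF G u).card :=
    Set.ncard_eq_toFinset_card _ (Set.toFinite _)
  omega

variable {G : SimpleGraph (Fin n)} {Δ : ℕ}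

lemma sph_zero (hc : G.Connected) (v : Fin n) : sph G v 0 = {v} := by
  ext u
  simp [sph, hc.dist_eq_zero_iff, eq_comm]

lemma card_sph_one (hc : G.Connected) (hdeg : ∀ u, (G.neighborSet u).ncard ≤ Δ)
    (v : Fin n) : (sph G v 1).card ≤ Δ := by
  refine le_trans (Finset.card_le_card ?_) (card_nbF (hdeg v))
  intro u hu
  rw [mem_nbF]
  exact adj_of_dist_eq_one hc (by simpa [sph] using hu)

lemma card_sph_succ_succ (hc : G.Connected) (hdeg : ∀ u, (G.neighborSet u).ncard ≤ Δ)
    (v : Fin n) (r : ℕ) :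
    (sph G v (r + 2)).card ≤ (Δ - 1) * (sph G v (r + 1)).card := by
  classical
  set s := sph G v (r + 2) with hs
  have hmem : ∀ x ∈ s, ∃ y, G.Adj y x ∧ G.dist v y = r + 1 := by
    intro x hx
    exact exists_adj_dist hc (by simpa [hs, sph] using hx)
  set f : Fin n → Fin n := fun x =>
    if h : ∃ y, G.Adj y x ∧ G.dist v y = r + 1 then h.choose else v with hf
  have hfs : ∀ x ∈ s, G.Adj (f x) x ∧ G.dist v (f x) = r + 1 := by
    intro x hx
    have h := hmem x hx
    simp only [hf, dif_pos h]
    exact h.choose_spec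
  refine Finset.card_le_mul_card_image_of_maps_to (f := f) (t := sph G v (r + 1))
    (fun x hx => by simp [sph, (hfs x hx).2]) (Δ - 1) ?_
  intro y hy
  have hyd : G.dist v y = r + 1 := by simpa [sph] using hy
  obtain ⟨c, hc1, hc2⟩ := exists_adj_dist hc hyd
  have hsub : (s.filter (fun x => f x = y)) ⊆ (nbF G y).erase c := by
    intro x hx
    rw [Finset.mem_filter] at hx
    obtain ⟨hx1, hx2⟩ := hx
    have := hfs x hx1
    rw [hx2] at this
    rw [Finset.mem_erase, mem_nbF]
    constructor
    · intro hxc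
      subst hxc
      have : G.dist v x = r + 2 := by simpa [hs, sph] using hx1
      omega
    · exact this.1
  refine le_trans (Finset.card_le_card hsub) ?_
  have hcy : c ∈ nbF G y := by rw [mem_nbF]; exact hc1.symm
  rw [Finset.card_erase_of_mem hcy]
  have := card_nbF (Δ := Δ) (hdeg y)
  omega

lemma card_sph (hc : G.Connected) (hdeg : ∀ u, (G.neighborSet u).ncard ≤ Δ)
    (v : Fin n) : ∀ r : ℕ, (sph G v (r + 1)).card ≤ Δ * (Δ - 1) ^ r := by
  intro r
  induction r with
  | zero => simpa using card_sph_one hc hdeg v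
  | succ r ih =>
    have h1 := card_sph_succ_succ hc hdeg v r
    calc (sph G v (r + 2)).card ≤ (Δ - 1) * (sph G v (r + 1)).card := h1
      _ ≤ (Δ - 1) * (Δ * (Δ - 1) ^ r) := Nat.mul_le_mul_left _ ih
      _ = Δ * (Δ - 1) ^ (r + 1) := by ring

lemma card_bal (hc : G.Connected) (hdeg : ∀ u, (G.neighborSet u).ncard ≤ Δ)
    (v : Fin n) : ∀ r : ℕ, (bal G v r).card ≤ 1 + Δ * ∑ i ∈ Finset.range r, (Δ - 1) ^ i := by
  intro r
  induction r with
  | zero =>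
    have : bal G v 0 = sph G v 0 := by ext u; simp [bal, sph]
    rw [this, sph_zero hc]
    simp
  | succ r ih =>
    have hsplit : bal G v (r + 1) ⊆ bal G v r ∪ sph G v (r + 1) := by
      intro u hu
      rw [mem_bal] at hu
      rw [Finset.mem_union, mem_bal]
      simp only [sph, Finset.mem_filter, Finset.mem_univ, true_and]
      omega
    calc (bal G v (r + 1)).card ≤ (bal G v r ∪ sph G v (r + 1)).card :=
          Finset.card_le_card hsplit
      _ ≤ (bal G v r).card + (sph G v (r + 1)).card := Finset.card_union_le _ _
      _ ≤ (1 + Δ * ∑ i ∈ Finset.range r, (Δ - 1) ^ i) + Δ * (Δ - 1) ^ r :=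
          Nat.add_le_add ih (card_sph hc hdeg v r)
      _ = 1 + Δ * ∑ i ∈ Finset.range (r + 1), (Δ - 1) ^ i := by
          rw [Finset.sum_range_succ, Nat.mul_add]; ring

end Ball

section Enc

variable (n q Δ k idMax : ℕ)

/-- local data claimed for a vertex: its closed neighborhood (as a finset) and its
local function (as a function on global configurations that depends only on the
closed neighborhood). -/
def Data : Type :=
  {p : Finset (Fin n) × ((Fin n → Fin q) → Fin q) //
    p.1.card ≤ Δ + 1 ∧ ∀ x y : Fin n → Fin q, (∀ w ∈ p.1, x w = y w) → p.2 x = p.2 y}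

instance : Finite (Data n q Δ) := by unfold Data; infer_instance

noncomputable instance : Fintype (Data n q Δ) := Fintype.ofFinite _

abbrev Entry : Type := Fin n × Fin (min k n + 1) × Data n q Δ

/-- bound on the number of entries in a certificate -/
def Bb : ℕ := min n (1 + Δ * ∑ i ∈ Finset.range k, (Δ - 1) ^ i)

/-- certificate contents -/
def CT : Type := {l : List (Entry n q Δ k) // l.length ≤ Bb n Δ k}

def ctRep (φ : CT n q Δ k) : Fin (Bb n Δ k) → Option (Entry n q Δ k) :=
  fun i => φ.1[(i : ℕ)]?

lemma ctRep_inj : Function.Injective (ctRep n q Δ k) := by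
  intro a b h
  apply Subtype.ext
  apply List.ext_getElem?
  intro i
  by_cases hi : i < Bb n Δ k
  · exact congrFun h ⟨i, hi⟩
  · have ha := a.2
    have hb := b.2
    rw [List.getElem?_eq_none (by omega), List.getElem?_eq_none (by omega)]

instance : Finite (CT n q Δ k) := Finite.of_injective _ (ctRep_inj n q Δ k)

noncomputable instance : Fintype (CT n q Δ k) := Fintype.ofFinite _

lemma card_CT_le :
    Fintype.card (CT n q Δ k) ≤ (Fintype.card (Entry n q Δ k) + 1) ^ Bb n Δ k := by
  have h := Fintype.card_le_of_injective _ (ctRep_inj n q Δ k)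
  calc Fintype.card (CT n q Δ k)
      ≤ Fintype.card (Fin (Bb n Δ k) → Option (Entry n q Δ k)) := h
    _ = (Fintype.card (Entry n q Δ k) + 1) ^ Bb n Δ k := by
        rw [Fintype.card_fun]
        simp

def dataRep (hq : 0 < q) (d : Data n q Δ) :
    (Fin (Δ + 1) → Option (Fin n)) × ((Fin (Δ + 1) → Fin q) → Fin q) :=
  ⟨fun i => (d.1.1.sort (· ≤ ·))[(i : ℕ)]?,
   fun t => d.1.2 (fun u => if h : u ∈ d.1.1.sort (· ≤ ·) then
      t ⟨(d.1.1.sort (· ≤ ·)).idxOf u,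
        lt_of_lt_of_le (List.idxOf_lt_length_iff.2 h)
          (by rw [Finset.length_sort]; exact d.2.1)⟩
    else ⟨0, hq⟩)⟩

lemma dataRep_inj (hq : 0 < q) : Function.Injective (dataRep n q Δ hq) := by
  intro d e h
  have h1 := congrArg Prod.fst h
  have h2 := congrArg Prod.snd h
  have hlist : d.1.1.sort (· ≤ ·) = e.1.1.sort (· ≤ ·) := by
    apply List.ext_getElem?
    intro i
    by_cases hi : i < Δ + 1
    · exact congrFun h1 ⟨i, hi⟩
    · rw [List.getElem?_eq_none, List.getElem?_eq_none]
      · rw [Finset.length_sort]; have := e.2.1; omega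
      · rw [Finset.length_sort]; have := d.2.1; omega
  have hset : d.1.1 = e.1.1 := by
    ext a
    rw [← Finset.mem_sort (α := Fin n) (· ≤ ·), ← Finset.mem_sort (α := Fin n) (· ≤ ·), hlist]
  -- key evaluation lemma
  have key : ∀ (f : Data n q Δ) (x : Fin n → Fin q),
      (dataRep n q Δ hq f).2
        (fun i => if hil : (i : ℕ) < (f.1.1.sort (· ≤ ·)).length then
            x ((f.1.1.sort (· ≤ ·)).get ⟨i, hil⟩) else ⟨0, hq⟩) = f.1.2 x := by
    intro f x
    apply f.2.2
    intro w hw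
    have hwmem : w ∈ f.1.1.sort (· ≤ ·) := (Finset.mem_sort _).2 hw
    simp only [dataRep]
    rw [dif_pos hwmem]
    have hwl : (f.1.1.sort (· ≤ ·)).idxOf w < (f.1.1.sort (· ≤ ·)).length :=
      List.idxOf_lt_length_iff.2 hwmem
    simp only [dif_pos hwl]
    exact congrArg x (List.idxOf_get hwl)
  have hfun : d.1.2 = e.1.2 := by
    funext x
    have k1 := key d x
    have k2 := key e x
    have harg :
        (fun i : Fin (Δ + 1) => if hil : (i : ℕ) < (d.1.1.sort (· ≤ ·)).length then
            x ((d.1.1.sort (· ≤ ·)).get ⟨(i : ℕ), hil⟩) else (⟨0, hq⟩ : Fin q)) =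
        (fun i : Fin (Δ + 1) => if hil : (i : ℕ) < (e.1.1.sort (· ≤ ·)).length then
            x ((e.1.1.sort (· ≤ ·)).get ⟨(i : ℕ), hil⟩) else (⟨0, hq⟩ : Fin q)) := by
      exact congrArg
        (fun l : List (Fin n) => fun i : Fin (Δ + 1) =>
          if hil : (i : ℕ) < l.length then x (l.get ⟨i, hil⟩) else (⟨0, hq⟩ : Fin q))
        hlist
    rw [← k1, ← k2, harg, h2]
  apply Subtype.ext
  exact Prod.ext hset hfun

lemma card_Data_le (hq : 0 < q) :
    Fintype.card (Data n q Δ) ≤ (n + 1) ^ (Δ + 1) * q ^ q ^ (Δ + 1) := by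
  have h := Fintype.card_le_of_injective _ (dataRep_inj n q Δ hq)
  calc Fintype.card (Data n q Δ)
      ≤ Fintype.card ((Fin (Δ + 1) → Option (Fin n)) × ((Fin (Δ + 1) → Fin q) → Fin q)) := h
    _ = (n + 1) ^ (Δ + 1) * q ^ q ^ (Δ + 1) := by
        rw [Fintype.card_prod, Fintype.card_fun, Fintype.card_fun, Fintype.card_fun]
        simp

/-- certificate size bound -/
def Ssz : ℕ := Δ * ((Δ - 1) ^ (k + 1) - 1) * q ^ (Δ + 1) * Nat.clog 2 q * Nat.clog 2 idMax

noncomputable def enc (φ : CT n q Δ k) : List Bool :=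
  @dite _ (Nonempty (CT n q Δ k ↪ (Fin (Ssz q Δ k idMax) → Bool)))
    (Classical.propDecidable _) (fun h => List.ofFn (h.some φ)) (fun _ => [])

noncomputable def decode (c : List Bool) : Option (CT n q Δ k) :=
  @dite _ (∃ φ, enc n q Δ k idMax φ = c) (Classical.propDecidable _)
    (fun h => some h.choose) (fun _ => none)

lemma enc_length (φ : CT n q Δ k) : (enc n q Δ k idMax φ).length ≤ Ssz q Δ k idMax := by
  unfold enc
  split
  · simp
  · simp

lemma enc_inj (h : Nonempty (CT n q Δ k ↪ (Fin (Ssz q Δ k idMax) → Bool))) :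
    Function.Injective (enc n q Δ k idMax) := by
  intro a b hab
  unfold enc at hab
  rw [dif_pos h, dif_pos h] at hab
  exact h.some.injective (List.ofFn_injective hab)

lemma decode_enc (h : Nonempty (CT n q Δ k ↪ (Fin (Ssz q Δ k idMax) → Bool)))
    (φ : CT n q Δ k) : decode n q Δ k idMax (enc n q Δ k idMax φ) = some φ := by
  unfold decode
  rw [dif_pos ⟨φ, rfl⟩]
  congr 1
  exact enc_inj n q Δ k idMax h (Exists.choose_spec (⟨φ, rfl⟩ : ∃ ψ, enc n q Δ k idMax ψ = enc n q Δ k idMax φ))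

end Enc

section Scheme

variable (n q Δ k idMax : ℕ)

def lookup (l : List (Entry n q Δ k)) (u : Fin n) :
    Option (Fin (min k n + 1) × Data n q Δ) :=
  (l.find? (fun e => decide (e.1 = u))).map Prod.snd

lemma lookup_map (g : Fin n → Fin (min k n + 1) × Data n q Δ) (u : Fin n) :
    ∀ l : List (Fin n),
      lookup n q Δ k (l.map (fun a => (a, g a))) u = if u ∈ l then some (g u) else none := by
  intro l
  induction l with
  | nil => simp [lookup]
  | cons a l ih =>
    by_cases h : a = u
    · subst h
      simp [lookup, List.find?_cons]
    · rw [List.map_cons]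
      unfold lookup
      rw [List.find?_cons]
      have : (decide ((a, g a).1 = u)) = false := by simp [h]
      rw [this]
      unfold lookup at ih
      rw [ih]
      by_cases hm : u ∈ l
      · rw [if_pos hm, if_pos (List.mem_cons.mpr (Or.inr hm))]
      · rw [if_neg hm, if_neg (fun hc => by
          rcases List.mem_cons.mp hc with h1 | h2
          · exact h h1.symm
          · exact hm h2)]

noncomputable def mkL (s : Finset (Fin n)) (g : Fin n → Fin (min k n + 1) × Data n q Δ) :
    List (Entry n q Δ k) :=
  s.toList.map (fun a => (a, g a))

lemma lookup_mkL (s : Finset (Fin n)) (g : Fin n → Fin (min k n + 1) × Data n q Δ)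
    (u : Fin n) :
    lookup n q Δ k (mkL n q Δ k s g) u = if u ∈ s then some (g u) else none := by
  rw [mkL, lookup_map]
  simp [Finset.mem_toList]

lemma length_mkL (s : Finset (Fin n)) (g : Fin n → Fin (min k n + 1) × Data n q Δ) :
    (mkL n q Δ k s g).length = s.card := by
  rw [mkL, List.length_map, Finset.length_toList]

def Chk1 (v : Fin n) (l : List (Entry n q Δ k)) (A : Fin n → Prop)
    (g : (Fin n → Fin q) → Fin q) : Prop :=
  ∃ r d, lookup n q Δ k l v = some (r, d) ∧ (r : ℕ) = 0 ∧
    (↑d.1.1 : Set (Fin n)) = insert v {w | A w} ∧ ∀ x, d.1.2 x = g x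

def Chk2 (l m : List (Entry n q Δ k)) : Prop :=
  ∀ u r d, lookup n q Δ k m u = some (r, d) → (r : ℕ) < k →
    ∃ r', lookup n q Δ k l u = some (r', d) ∧ (r' : ℕ) ≤ (r : ℕ) + 1

def Chk3 (v : Fin n) (l : List (Entry n q Δ k)) : Prop :=
  ∃ (G' : SimpleGraph (Fin n)) (F' : (Fin n → Fin q) → Fin n → Fin q),
    IsFSD G' F' ∧
    (∀ u r d, lookup n q Δ k l u = some (r, d) →
      (↑d.1.1 : Set (Fin n)) = closedNbhd G' u ∧ ∀ x, d.1.2 x = F' x u) ∧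
    ∀ x, F'^[k + 1] x v = F'^[k] x v

def Pmain (v : Fin n) (A : Fin n → Prop) (g : (Fin n → Fin q) → Fin q)
    (cv : List Bool) (cs : Fin n → List Bool) : Prop :=
  ∃ φ : CT n q Δ k, decode n q Δ k idMax cv = some φ ∧
    Chk1 n q Δ k v φ.1 A g ∧
    (∀ w, A w → ∃ ψ : CT n q Δ k, decode n q Δ k idMax (cs w) = some ψ ∧
      Chk2 n q Δ k φ.1 ψ.1) ∧
    Chk3 n q Δ k v φ.1

noncomputable def ver : SimpleGraph (Fin n) → ((Fin n → Fin q) → Fin n → Fin q) →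
    (Fin n → ℕ) → (Fin n → List Bool) → Fin n → Bool :=
  fun G F _ cert v =>
    if n ≤ 1 then cdecide (ConvergesIn F k)
    else cdecide (Pmain n q Δ k idMax v (G.Adj v) (fun x => F x v) (cert v) cert)

noncomputable def piS : PLS n (Fin q) where
  verify := ver n q Δ k idMax
  locality := by
    intro G G' F F' ids ids' cert cert' v h1 _ _ h4 h5 h6
    by_cases hn : n ≤ 1
    · simp only [ver, if_pos hn]
      apply cdecide_congr
      have hFF : F = F' := by
        funext x u
        have hu : u = v := by
          apply Fin.ext
          have h1 := u.isLt
          have h2 := v.isLt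
          omega
        rw [hu, h4]
      rw [hFF]
    · simp only [ver, if_neg hn]
      apply cdecide_congr
      have hA : G.Adj v = G'.Adj v := funext fun w => propext (h1 w)
      have hg : (fun x => F x v) = (fun x => F' x v) := funext h4
      rw [← hA, ← hg, ← h5]
      constructor
      · rintro ⟨φ, hd, hc1, hc2, hc3⟩
        exact ⟨φ, hd, hc1, fun w hw => by rw [← h6 w hw]; exact hc2 w hw, hc3⟩
      · rintro ⟨φ, hd, hc1, hc2, hc3⟩
        exact ⟨φ, hd, hc1, fun w hw => by rw [h6 w hw]; exact hc2 w hw, hc3⟩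

end Scheme

section Arith

lemma geom (d : ℕ) : ∀ m : ℕ, (d + 1) * ∑ i ∈ Finset.range m, (d + 2) ^ i + 1 = (d + 2) ^ m := by
  intro m
  induction m with
  | zero => simp
  | succ m ih =>
    rw [Finset.sum_range_succ, Nat.mul_add, pow_succ]
    zify at ih ⊢
    linear_combination ih

lemma helper1 (d : ℕ) : 2 * (d + 6) ≤ 2 ^ (d + 4) := by
  have h := Nat.lt_two_pow_self (n := d)
  have h2 : 2 ^ (d + 4) = 2 ^ d * 16 := by rw [pow_add]; norm_num
  omega

variable (n q Δ k idMax : ℕ)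

lemma twoB_le (hΔ : 2 < Δ) :
    2 * Bb n Δ k ≤ Δ * ((Δ - 1) ^ (k + 1) - 1) := by
  obtain ⟨d, rfl⟩ : ∃ d, Δ = d + 3 := ⟨Δ - 3, by omega⟩
  set σ := ∑ i ∈ Finset.range k, (d + 2) ^ i with hσ
  have hg : (d + 1) * σ + 1 = (d + 2) ^ k := geom d k
  have h3 : d + 3 - 1 = d + 2 := by omega
  have hA : (d + 3 - 1) ^ (k + 1) - 1 = (d + 1) * (σ + (d + 2) ^ k) := by
    have hg2 := geom d (k + 1)
    rw [Finset.sum_range_succ] at hg2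
    rw [h3]
    set Y := (d + 1) * (σ + (d + 2) ^ k) with hY
    omega
  have hBle : Bb n (d + 3) k ≤ 1 + (d + 3) * σ := by
    calc Bb n (d + 3) k ≤ 1 + (d + 3) * ∑ i ∈ Finset.range k, (d + 3 - 1) ^ i :=
          min_le_right _ _
      _ = 1 + (d + 3) * σ := by rw [h3]
  rw [hA]
  have hX : (d + 2) ^ k = (d + 1) * σ + 1 := hg.symm
  rw [hX]
  have e : (d + 3) * ((d + 1) * (σ + ((d + 1) * σ + 1))) =
      ((d + 1) * (d + 2) * (d + 3)) * σ + (d + 1) * (d + 3) := by ring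
  rw [e]
  have c1 : 2 ≤ (d + 1) * (d + 3) := by nlinarith [Nat.zero_le d]
  have c2 : (2 * d + 6) * σ ≤ ((d + 1) * (d + 2) * (d + 3)) * σ :=
    Nat.mul_le_mul_right σ (by nlinarith [Nat.zero_le d])
  calc 2 * Bb n (d + 3) k ≤ 2 * (1 + (d + 3) * σ) := Nat.mul_le_mul_left 2 hBle
    _ = 2 + (2 * d + 6) * σ := by ring
    _ ≤ (d + 1) * (d + 3) + ((d + 1) * (d + 2) * (d + 3)) * σ := Nat.add_le_add c1 c2
    _ = ((d + 1) * (d + 2) * (d + 3)) * σ + (d + 1) * (d + 3) := by ring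

lemma card_le_two_pow (hq : 1 < q) (hΔ : 2 < Δ) (hn : 2 ≤ n) (hid : n ≤ idMax) :
    Fintype.card (CT n q Δ k) ≤ 2 ^ Ssz q Δ k idMax := by
  set Lq := Nat.clog 2 q with hLqdef
  set Li := Nat.clog 2 idMax with hLidef
  have hLq : 1 ≤ Lq := Nat.clog_pos one_lt_two hq
  have hLi : 1 ≤ Li := Nat.clog_pos one_lt_two (by omega)
  have hq2 : q ≤ 2 ^ Lq := Nat.le_pow_clog one_lt_two q
  have hn2 : n ≤ 2 ^ Li := le_trans hid (Nat.le_pow_clog one_lt_two idMax)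
  have hqpos : 0 < q := by omega
  set Qb := q ^ q ^ (Δ + 1) with hQb
  have hQpos : 1 ≤ Qb := Nat.one_le_pow _ _ hqpos
  have hE : Fintype.card (Entry n q Δ k) = n * ((min k n + 1) * Fintype.card (Data n q Δ)) := by
    simp [Entry]
  have hD : Fintype.card (Data n q Δ) ≤ (n + 1) ^ (Δ + 1) * Qb := card_Data_le n q Δ hqpos
  have hE1 : Fintype.card (Entry n q Δ k) + 1 ≤ (n + 1) ^ (Δ + 3) * Qb := by
    have h0 : min k n + 1 ≤ n + 1 := by
      have := min_le_right k n; omega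
    have hpe : 1 ≤ (n + 1) ^ (Δ + 2) * Qb :=
      Nat.one_le_iff_ne_zero.mpr (by positivity)
    calc Fintype.card (Entry n q Δ k) + 1
        ≤ n * ((n + 1) * ((n + 1) ^ (Δ + 1) * Qb)) + 1 := by
          rw [hE]; gcongr
      _ = n * ((n + 1) ^ (Δ + 2) * Qb) + 1 := by ring_nf
      _ ≤ n * ((n + 1) ^ (Δ + 2) * Qb) + (n + 1) ^ (Δ + 2) * Qb := by omega
      _ = (n + 1) * ((n + 1) ^ (Δ + 2) * Qb) := by ring
      _ = (n + 1) ^ (Δ + 3) * Qb := by ring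
  set t := 2 * Li * (Δ + 3) + Lq * q ^ (Δ + 1) with ht
  have hE2 : Fintype.card (Entry n q Δ k) + 1 ≤ 2 ^ t := by
    refine le_trans hE1 ?_
    have hsplit : (2 : ℕ) ^ t = 2 ^ (2 * Li * (Δ + 3)) * 2 ^ (Lq * q ^ (Δ + 1)) := by
      rw [ht, pow_add]
    rw [hsplit]
    apply Nat.mul_le_mul
    · have hnp : n + 1 ≤ 2 ^ (2 * Li) := by
        have he : 2 ^ (2 * Li) = 2 ^ Li * 2 ^ Li := by rw [two_mul, pow_add]
        have h2 : 2 ≤ 2 ^ Li := by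
          calc 2 = 2 ^ 1 := rfl
            _ ≤ 2 ^ Li := Nat.pow_le_pow_right (by norm_num) hLi
        nlinarith [hn2]
      calc (n + 1) ^ (Δ + 3) ≤ (2 ^ (2 * Li)) ^ (Δ + 3) := Nat.pow_le_pow_left hnp _
        _ = 2 ^ (2 * Li * (Δ + 3)) := by rw [← pow_mul]
    · calc Qb ≤ (2 ^ Lq) ^ q ^ (Δ + 1) := Nat.pow_le_pow_left hq2 _
        _ = 2 ^ (Lq * q ^ (Δ + 1)) := by rw [← pow_mul]
  have h2d : 2 * (Δ + 3) ≤ q ^ (Δ + 1) := by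
    obtain ⟨d, rfl⟩ : ∃ d, Δ = d + 3 := ⟨Δ - 3, by omega⟩
    calc 2 * (d + 3 + 3) = 2 * (d + 6) := by ring
      _ ≤ 2 ^ (d + 4) := helper1 d
      _ = 2 ^ (d + 3 + 1) := by ring_nf
      _ ≤ q ^ (d + 3 + 1) := Nat.pow_le_pow_left (by omega) _
  have hfin : t * Bb n Δ k ≤ Ssz q Δ k idMax := by
    have e1 : 2 * Li * (Δ + 3) ≤ q ^ (Δ + 1) * Lq * Li := by
      calc 2 * Li * (Δ + 3) = (2 * (Δ + 3)) * Li := by ring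
        _ ≤ q ^ (Δ + 1) * Li := Nat.mul_le_mul_right _ h2d
        _ = (q ^ (Δ + 1) * 1) * Li := by ring
        _ ≤ (q ^ (Δ + 1) * Lq) * Li := by gcongr
    have e2 : Lq * q ^ (Δ + 1) ≤ q ^ (Δ + 1) * Lq * Li := by
      calc Lq * q ^ (Δ + 1) = q ^ (Δ + 1) * Lq * 1 := by ring
        _ ≤ q ^ (Δ + 1) * Lq * Li := by gcongr
    calc t * Bb n Δ k
        ≤ (q ^ (Δ + 1) * Lq * Li + q ^ (Δ + 1) * Lq * Li) * Bb n Δ k := by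
          rw [ht]; exact Nat.mul_le_mul_right _ (Nat.add_le_add e1 e2)
      _ = (q ^ (Δ + 1) * Lq * Li) * (2 * Bb n Δ k) := by ring
      _ ≤ (q ^ (Δ + 1) * Lq * Li) * (Δ * ((Δ - 1) ^ (k + 1) - 1)) :=
          Nat.mul_le_mul_left _ (twoB_le n Δ k hΔ)
      _ = Ssz q Δ k idMax := by rw [Ssz]; ring
  calc Fintype.card (CT n q Δ k)
      ≤ (Fintype.card (Entry n q Δ k) + 1) ^ Bb n Δ k := card_CT_le n q Δ k
    _ ≤ (2 ^ t) ^ Bb n Δ k := Nat.pow_le_pow_left hE2 _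
    _ = 2 ^ (t * Bb n Δ k) := by rw [← pow_mul]
    _ ≤ 2 ^ Ssz q Δ k idMax := Nat.pow_le_pow_right (by norm_num) hfin

end Arith

end Stmt2

/-!
STATEMENT 2: For every integer q > 1, every integer Δ > 2, and every integer k ≥ 0,
the problem Convergence(k,q) restricted to graphs of maximum degree at most Δ admits
a proof-labeling scheme with certificates of size at most
Δ·((Δ−1)^{k+1} − 1) · q^{Δ+1} · ⌈log₂ q⌉ · ⌈log₂ id_max⌉ bits, on graphs whose
identifiers are assigned injectively from [id_max].
-/
theorem statement_2 (q Δ k n idMax : ℕ) (hq : 1 < q) (hΔ : 2 < Δ) (hid : n ≤ idMax) :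
    ∃ π : PLS n (Fin q),
      π.Correct
        (fun G _ => ∀ v, (G.neighborSet v).ncard ≤ Δ)
        (fun _ F => ConvergesIn F k)
        (fun _ _ => Δ * ((Δ - 1) ^ (k + 1) - 1) * q ^ (Δ + 1) *
          Nat.clog 2 q * Nat.clog 2 idMax)
        idMax := by
  classical
  refine ⟨Stmt2.piS n q Δ k idMax, ?_⟩
  intro G F hconn hFSD hdeg ids _ _
  constructor
  · -- completeness
    intro hL
    by_cases hn : n ≤ 1
    · refine ⟨fun _ => [], fun v => by simp, fun v => ?_⟩
      show Stmt2.ver n q Δ k idMax G F ids (fun _ => []) v = true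
      rw [Stmt2.ver, if_pos hn]
      exact Stmt2.cdecide_eq_true hL
    · have hn2 : 2 ≤ n := by omega
      have hemb : Nonempty (Stmt2.CT n q Δ k ↪ (Fin (Stmt2.Ssz q Δ k idMax) → Bool)) := by
        apply Function.Embedding.nonempty_of_card_le
        calc Fintype.card (Stmt2.CT n q Δ k) ≤ 2 ^ Stmt2.Ssz q Δ k idMax :=
              Stmt2.card_le_two_pow n q Δ k idMax hq hΔ hn2 hid
          _ = Fintype.card (Fin (Stmt2.Ssz q Δ k idMax) → Bool) := by
              rw [Fintype.card_fun]; simp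
      have hdistlt : ∀ v u : Fin n, G.dist v u < n := fun v u => Stmt2.dist_lt_card hconn v u
      -- true local data of a vertex
      set dat : Fin n → Stmt2.Data n q Δ := fun u =>
        ⟨⟨Stmt2.cnbF G u, fun x => F x u⟩,
          ⟨Stmt2.card_cnbF (hdeg u),
           fun x y hxy => hFSD u x y (fun w hw => hxy w (Stmt2.mem_cnbF.mpr hw))⟩⟩ with hdat
      set gv : Fin n → Fin n → Fin (min k n + 1) × Stmt2.Data n q Δ := fun v u =>
        (⟨min (G.dist v u) (min k n), by omega⟩, dat u) with hgv
      have hctlen : ∀ v : Fin n,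
          (Stmt2.mkL n q Δ k (Stmt2.bal G v k) (gv v)).length ≤ Stmt2.Bb n Δ k := by
        intro v
        rw [Stmt2.length_mkL]
        apply le_min
        · calc (Stmt2.bal G v k).card ≤ Fintype.card (Fin n) := Finset.card_le_univ _
            _ = n := by simp
        · exact Stmt2.card_bal hconn hdeg v k
      set ct : Fin n → Stmt2.CT n q Δ k := fun v =>
        ⟨Stmt2.mkL n q Δ k (Stmt2.bal G v k) (gv v), hctlen v⟩ with hct
      refine ⟨fun v => Stmt2.enc n q Δ k idMax (ct v),
        fun v => Stmt2.enc_length n q Δ k idMax (ct v), ?_⟩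
      intro v
      show Stmt2.ver n q Δ k idMax G F ids (fun w => Stmt2.enc n q Δ k idMax (ct w)) v = true
      rw [Stmt2.ver, if_neg hn]
      apply Stmt2.cdecide_eq_true
      have hlk : ∀ w u : Fin n, Stmt2.lookup n q Δ k (ct w).1 u =
          if u ∈ Stmt2.bal G w k then some (gv w u) else none := by
        intro w u
        exact Stmt2.lookup_mkL n q Δ k _ _ u
      refine ⟨ct v, Stmt2.decode_enc n q Δ k idMax hemb (ct v), ?_, ?_, ?_⟩
      · -- Chk1
        refine ⟨(gv v v).1, dat v, ?_, ?_, ?_, ?_⟩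
        · rw [hlk v v, if_pos (Stmt2.mem_bal.mpr (by simp [SimpleGraph.dist_self]))]
        · simp [hgv, SimpleGraph.dist_self]
        · rw [hdat]
          exact Stmt2.coe_cnbF G v
        · intro x; rfl
      · -- Chk2 with neighbors
        intro w hw
        refine ⟨ct w, Stmt2.decode_enc n q Δ k idMax hemb (ct w), ?_⟩
        intro u r d hlu hrk
        rw [hlk w u] at hlu
        by_cases hu : u ∈ Stmt2.bal G w k
        · rw [if_pos hu] at hlu
          have hrd : r = (gv w u).1 ∧ d = dat u := by
            have := Option.some.inj hlu
            constructor
            · exact (congrArg Prod.fst this).symm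
            · exact (congrArg Prod.snd this).symm
          have hdwu : G.dist w u ≤ k := Stmt2.mem_bal.mp hu
          have hrval : (r : ℕ) = G.dist w u := by
            rw [hrd.1, hgv]
            simp only
            have : min (G.dist w u) (min k n) = G.dist w u :=
              min_eq_left (le_min hdwu (le_of_lt (hdistlt w u)))
            simp [this]
          have hdvu : G.dist v u ≤ G.dist w u + 1 := by
            have ht := hconn.dist_triangle (u := v) (v := w) (w := u)
            have := Stmt2.adj_dist_le_one hw
            omega
          have hvuk : G.dist v u ≤ k := by omega
          refine ⟨(gv v u).1, ?_, ?_⟩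
          · rw [hlk v u, if_pos (Stmt2.mem_bal.mpr hvuk), hrd.2]
          · have : ((gv v u).1 : ℕ) = G.dist v u := by
              rw [hgv]
              simp only
              have hmin : min (G.dist v u) (min k n) = G.dist v u :=
                min_eq_left (le_min hvuk (le_of_lt (hdistlt v u)))
              simp [hmin]
            omega
        · rw [if_neg hu] at hlu
          exact absurd hlu (by simp)
      · -- Chk3
        refine ⟨G, F, hFSD, ?_, ?_⟩
        · intro u r d hlu
          rw [hlk v u] at hlu
          by_cases hu : u ∈ Stmt2.bal G v k
          · rw [if_pos hu] at hlu
            have hd : d = dat u := (congrArg Prod.snd (Option.some.inj hlu)).symm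
            subst hd
            exact ⟨Stmt2.coe_cnbF G u, fun x => rfl⟩
          · rw [if_neg hu] at hlu
            exact absurd hlu (by simp)
        · intro x
          rw [Function.iterate_succ_apply']
          exact congrFun (hL x) v
  · -- soundness
    intro hnL cert _
    by_contra hall
    push_neg at hall
    apply hnL
    have hallT : ∀ v, Stmt2.ver n q Δ k idMax G F ids cert v = true := by
      intro v
      have h := hall v
      show Stmt2.ver n q Δ k idMax G F ids cert v = true
      cases hb : Stmt2.ver n q Δ k idMax G F ids cert v
      · exact absurd hb (h)
      · rfl
    by_cases hn : n ≤ 1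
    · obtain ⟨v⟩ := hconn.nonempty
      have h := hallT v
      rw [Stmt2.ver, if_pos hn] at h
      exact Stmt2.of_cdecide_eq_true h
    · have hver : ∀ v, Stmt2.Pmain n q Δ k idMax v (G.Adj v) (fun x => F x v)
          (cert v) cert := by
        intro v
        have h := hallT v
        rw [Stmt2.ver, if_neg hn] at h
        exact Stmt2.of_cdecide_eq_true h
      choose φ hdec hC1 hC2 hC3 using hver
      have key : ∀ ρ (v u : Fin n), G.dist v u ≤ ρ → G.dist v u ≤ k →
          ∃ r d, Stmt2.lookup n q Δ k (φ v).1 u = some (r, d) ∧ (r : ℕ) ≤ G.dist v u ∧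
            (↑d.1.1 : Set (Fin n)) = closedNbhd G u ∧ ∀ x, d.1.2 x = F x u := by
        intro ρ
        induction ρ with
        | zero =>
          intro v u h0 _
          have huv : v = u := hconn.dist_eq_zero_iff.mp (by omega)
          subst huv
          obtain ⟨r, d, hlkv, hr0, hset, hfun⟩ := hC1 v
          exact ⟨r, d, hlkv, by omega, hset, hfun⟩
        | succ ρ ih =>
          intro v u hle hk
          by_cases h : G.dist v u ≤ ρ
          · exact ih v u h hk
          · have hd : G.dist v u = ρ + 1 := by omega
            obtain ⟨y, hy, hyd⟩ := Stmt2.exists_adj_dist hconn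
              (show G.dist u v = ρ + 1 by rw [SimpleGraph.dist_comm]; exact hd)
            have hwv : G.Adj v y := hy.symm
            have hwu : G.dist y u = ρ := by rw [SimpleGraph.dist_comm]; exact hyd
            obtain ⟨r, d, hl, hr, hset, hfun⟩ := ih y u (le_of_eq hwu) (by omega)
            obtain ⟨ψ, hdψ, h2⟩ := hC2 v y hwv
            have hψ : ψ = φ y := by
              rw [hdec y] at hdψ
              exact (Option.some.inj hdψ).symm
            obtain ⟨r', hl', hr'⟩ := h2 u r d (by rw [hψ]; exact hl) (by omega)
            exact ⟨r', d, hl', by omega, hset, hfun⟩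
      intro x
      funext v
      obtain ⟨G', F', hFSD', htrue, hcv⟩ := hC3 v
      have hagree : ∀ u, G.dist v u < k + 1 →
          closedNbhd G u = closedNbhd G' u ∧ ∀ y, F y u = F' y u := by
        intro u hu
        obtain ⟨r, d, hl, _, hset, hfun⟩ := key k v u (by omega) (by omega)
        obtain ⟨hset', hfun'⟩ := htrue u r d hl
        exact ⟨hset.symm.trans hset', fun y => (hfun y).symm.trans (hfun' y)⟩
      have e1 := Stmt2.iterate_agree hFSD hFSD' hconn (k + 1) v hagree x
      have e2 := Stmt2.iterate_agree hFSD hFSD' hconn k v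
        (fun u hu => hagree u (by omega)) x
      have hstep : F^[k + 1] x v = F (F^[k] x) v := by
        rw [Function.iterate_succ_apply']
      rw [← hstep, e1, hcv x, ← e2]
end
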